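/- For g, h > 0, define φ(g,h) := (h²−g²)/(2 log(h/g)) if g < h and φ(g,h) := gh if g ≥ h. Then ψ_{B,g,h}(λ) ≤ (φ(g,h)/(gh))·(λ²/2) for all λ ≥ 0, with equality occurring in the dual formulation at u = h − g when g < h. -/

import Mathlib

/-- The Kearns-Saul constant `φ(g,h)`. -/
noncomputable def ksPhi (g h : ℝ) : ℝ :=
  if g < h then (h ^ 2 - g ^ 2) / (2 * Real.log (h / g)) else g * h

/-- The Bernoulli potential `ψ_{B,g,h}`. -/
noncomputable def psiB (g h l : ℝ) : ℝ :=
  1 / (g * h) * Real.log ((g * Real.exp (h * l) + h * Real.exp (-(g * l))) / (g + h))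

open Real Set


/-- endpoint comparison from a derivative bound -/
lemma ks_mono_aux {F F' : ℝ → ℝ} {u v : ℝ}
    (hd : ∀ t ∈ Set.Icc u v, HasDerivAt F (F' t) t)
    (h0 : ∀ t ∈ Set.Ioo u v, 0 ≤ F' t) (huv : u ≤ v) : F u ≤ F v := by
  have hm : MonotoneOn F (Set.Icc u v) := by
    apply monotoneOn_of_deriv_nonneg (convex_Icc u v)
    · exact fun t ht => (hd t ht).continuousAt.continuousWithinAt
    · rw [interior_Icc]
      exact fun t ht => ((hd t (Ioo_subset_Icc_self ht)).differentiableAt).differentiableWithinAt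
    · rw [interior_Icc]
      intro t ht
      rw [(hd t (Ioo_subset_Icc_self ht)).deriv]
      exact h0 t ht
  exact hm (Set.left_mem_Icc.2 huv) (Set.right_mem_Icc.2 huv) huv

lemma ks_anti_aux {F F' : ℝ → ℝ} {u v : ℝ}
    (hd : ∀ t ∈ Set.Icc u v, HasDerivAt F (F' t) t)
    (h0 : ∀ t ∈ Set.Ioo u v, F' t ≤ 0) (huv : u ≤ v) : F v ≤ F u := by
  have h := ks_mono_aux (F := fun t => -F t) (F' := fun t => -F' t) (u := u) (v := v)
    (fun t ht => (hd t ht).neg) (fun t ht => neg_nonneg.2 (h0 t ht)) huv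
  simpa using h

-- 2 x log x ≤ x² - 1 for x ≥ 1
lemma ks_ineq1 {x : ℝ} (hx : 1 ≤ x) : 2 * x * Real.log x ≤ x ^ 2 - 1 := by
  have h := ks_mono_aux (F := fun t => t ^ 2 - 1 - 2 * (t * Real.log t))
      (F' := fun t => 2 * t - 2 * (Real.log t + 1)) (u := 1) (v := x)
    (by
      intro t ht
      have ht0 : t ≠ 0 := by have := ht.1; positivity
      have h1 : HasDerivAt (fun t : ℝ => t ^ 2 - 1) (2 * t) t := by
        simpa using ((hasDerivAt_pow 2 t).sub_const 1)
      exact h1.sub ((Real.hasDerivAt_mul_log ht0).const_mul 2))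
    (by
      intro t ht
      have h1 : Real.log t ≤ t - 1 := Real.log_le_sub_one_of_pos (by linarith [ht.1])
      show (0:ℝ) ≤ 2 * t - 2 * (Real.log t + 1)
      linarith) hx
  simp only [Real.log_one] at h
  nlinarith [h]

-- 2(x-1) ≤ (x+1) log x for x ≥ 1
lemma ks_ineq2 {x : ℝ} (hx : 1 ≤ x) : 2 * (x - 1) ≤ (x + 1) * Real.log x := by
  have h := ks_mono_aux (F := fun t => (t + 1) * Real.log t - 2 * (t - 1))
      (F' := fun t => 1 * Real.log t + (t + 1) * t⁻¹ - 2) (u := 1) (v := x)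
    (by
      intro t ht
      have ht0 : 0 < t := by linarith [ht.1]
      have h1 : HasDerivAt (fun t : ℝ => (t + 1) * Real.log t)
          (1 * Real.log t + (t + 1) * t⁻¹) t :=
        (((hasDerivAt_id t).add_const 1)).mul (Real.hasDerivAt_log ht0.ne')
      have h2 : HasDerivAt (fun t : ℝ => 2 * (t - 1)) 2 t := by
        simpa using ((hasDerivAt_id t).sub_const 1).const_mul 2
      exact h1.sub h2)
    (by
      intro t ht
      have ht0 : 0 < t := by linarith [ht.1]
      have h1 : Real.log t⁻¹ ≤ t⁻¹ - 1 := Real.log_le_sub_one_of_pos (by positivity)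
      rw [Real.log_inv] at h1
      show (0:ℝ) ≤ 1 * Real.log t + (t + 1) * t⁻¹ - 2
      have h2 : (t + 1) * t⁻¹ = 1 + t⁻¹ := by field_simp
      rw [h2]
      linarith) hx
  simp only [Real.log_one] at h
  nlinarith [h]


noncomputable def ksF (a c q : ℝ) : ℝ :=
  q * Real.log q - q * Real.log a + ((1-q) * Real.log (1-q) - (1-q) * Real.log (1-a))
    - c * (q-a)^2

noncomputable def ksF' (a c q : ℝ) : ℝ :=
  Real.log q - Real.log a - (Real.log (1-q) - Real.log (1-a)) - 2*c*(q-a)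

noncomputable def ksF'' (c q : ℝ) : ℝ := q⁻¹ + (1-q)⁻¹ - 2*c

lemma ksF_hasDeriv (a c p : ℝ) (hp0 : 0 < p) (hp1 : p < 1) :
    HasDerivAt (ksF a c) (ksF' a c p) p := by
  have h1p : (0:ℝ) < 1 - p := by linarith
  have h1 : HasDerivAt (fun q : ℝ => q * Real.log q) (Real.log p + 1) p :=
    Real.hasDerivAt_mul_log hp0.ne'
  have h2 : HasDerivAt (fun q : ℝ => q * Real.log a) (Real.log a) p := by
    simpa using (hasDerivAt_id p).mul_const (Real.log a)
  have h3 : HasDerivAt (fun q : ℝ => (1-q) * Real.log (1-q))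
      ((Real.log (1-p) + 1) * (-1)) p := by
    have hc : HasDerivAt (fun q : ℝ => 1 - q) (-1) p := by
      exact (hasDerivAt_id p).const_sub 1
    exact (Real.hasDerivAt_mul_log h1p.ne').comp p hc
  have h4 : HasDerivAt (fun q : ℝ => (1-q) * Real.log (1-a)) (-Real.log (1-a)) p := by
    have hc : HasDerivAt (fun q : ℝ => 1 - q) (-1) p := by
      exact (hasDerivAt_id p).const_sub 1
    simpa using hc.mul_const (Real.log (1-a))
  have h5 : HasDerivAt (fun q : ℝ => c * (q-a)^2) (c * (2*(p-a))) p := by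
    have hc : HasDerivAt (fun q : ℝ => (q-a)^2) (2*(p-a)) p := by
      exact (((hasDerivAt_id p).sub_const a).pow 2).congr_deriv (by norm_num)
    simpa using hc.const_mul c
  have := ((h1.sub h2).add (h3.sub h4)).sub h5
  refine this.congr_deriv ?_
  unfold ksF'
  ring

lemma ksF'_hasDeriv (a c p : ℝ) (hp0 : 0 < p) (hp1 : p < 1) :
    HasDerivAt (ksF' a c) (ksF'' c p) p := by
  have h1p : (0:ℝ) < 1 - p := by linarith
  have h1 : HasDerivAt (fun q : ℝ => Real.log q) p⁻¹ p := Real.hasDerivAt_log hp0.ne'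
  have h3 : HasDerivAt (fun q : ℝ => Real.log (1-q)) ((1-p)⁻¹ * (-1)) p := by
    have hc : HasDerivAt (fun q : ℝ => 1 - q) (-1) p := by
      exact (hasDerivAt_id p).const_sub 1
    exact (Real.hasDerivAt_log h1p.ne').comp p hc
  have h5 : HasDerivAt (fun q : ℝ => 2*c*(q-a)) (2*c) p := by
    simpa using ((hasDerivAt_id p).sub_const a).const_mul (2*c)
  have := (((h1.sub_const (Real.log a)).sub (h3.sub_const (Real.log (1-a)))).sub h5)
  refine this.congr_deriv ?_
  unfold ksF''
  ring


set_option maxHeartbeats 1000000 in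
/-- Ordentlich–Weinberger refined Pinsker, `a < 1/2`, `p ∈ [a,1)`. -/
lemma ksKL_OW (a p : ℝ) (ha0 : 0 < a) (ha2 : a < 1/2) (hap : a ≤ p) (hp1 : p < 1) :
    (p-a)^2 ≤ (1-2*a) / Real.log ((1-a)/a) *
      (p * (Real.log p - Real.log a) + (1-p) * (Real.log (1-p) - Real.log (1-a))) := by
  have h2a : (0:ℝ) < 1 - 2*a := by linarith
  have h1a : (0:ℝ) < 1 - a := by linarith
  have ha' : a ≠ 0 := ha0.ne'
  have h1a' : (1:ℝ) - a ≠ 0 := h1a.ne'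
  have hx1 : 1 < (1-a)/a := by rw [lt_div_iff₀ ha0]; linarith
  obtain ⟨L, hLdef⟩ : ∃ L : ℝ, L = Real.log ((1-a)/a) := ⟨_, rfl⟩
  have hL : 0 < L := hLdef ▸ Real.log_pos hx1
  have hLd : L = Real.log (1-a) - Real.log a := by
    rw [hLdef]; exact Real.log_div h1a' ha'
  obtain ⟨c, hcdef⟩ : ∃ c : ℝ, c = L / (1-2*a) := ⟨_, rfl⟩
  have hc : 0 < c := hcdef ▸ div_pos hL h2a
  obtain ⟨q, hqdef⟩ : ∃ q : ℝ, q = (1-2*a)/(2*L) := ⟨_, rfl⟩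
  have hq : 0 < q := hqdef ▸ div_pos h2a (by linarith)
  have hcq : 2*c = q⁻¹ := by
    rw [hcdef, hqdef]; field_simp
  -- q ≥ a(1-a)
  have hq1 : a * (1-a) ≤ q := by
    have h := ks_ineq1 hx1.le
    rw [← hLdef] at h
    have h' := mul_le_mul_of_nonneg_left h (sq_nonneg a)
    have e1 : a^2*(((1-a)/a)^2 - 1) = 1-2*a := by field_simp; ring
    have e2 : a^2*(2*((1-a)/a)*L) = 2*a*(1-a)*L := by field_simp
    rw [e1, e2] at h'
    rw [hqdef, le_div_iff₀ (by linarith : (0:ℝ) < 2*L)]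
    linarith
  -- q ≤ 1/4
  have hq2 : q ≤ 1/4 := by
    have h := ks_ineq2 hx1.le
    rw [← hLdef] at h
    have h' := mul_le_mul_of_nonneg_left h ha0.le
    have e3 : a*(2*((1-a)/a - 1)) = 2*(1-2*a) := by field_simp; ring
    have e4 : a*(((1-a)/a + 1)*L) = L := by field_simp; ring
    rw [e3, e4] at h'
    rw [hqdef, div_le_iff₀ (by linarith : (0:ℝ) < 2*L)]
    linarith
  obtain ⟨d, hddef⟩ : ∃ d : ℝ, d = Real.sqrt (1 - 4*q) := ⟨_, rfl⟩
  have hd0 : 0 ≤ d := hddef ▸ Real.sqrt_nonneg _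
  have hd2 : d^2 = 1 - 4*q := hddef ▸ Real.sq_sqrt (by linarith)
  have hd1 : d < 1 := by
    rw [hddef]
    have h' : 1 - 4*q < 1 := by linarith
    calc Real.sqrt (1-4*q) < Real.sqrt 1 := Real.sqrt_lt_sqrt (by linarith) h'
      _ = 1 := Real.sqrt_one
  have hda : d ≤ 1 - 2*a := by
    rw [hddef]
    have h' : 1 - 4*q ≤ (1-2*a)^2 := by nlinarith [hq1]
    calc Real.sqrt (1-4*q) ≤ Real.sqrt ((1-2*a)^2) := Real.sqrt_le_sqrt h'
      _ = 1-2*a := by rw [Real.sqrt_sq h2a.le]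
  obtain ⟨p₁, hp1def⟩ : ∃ p₁ : ℝ, p₁ = (1-d)/2 := ⟨_, rfl⟩
  obtain ⟨p₂, hp2def⟩ : ∃ p₂ : ℝ, p₂ = (1+d)/2 := ⟨_, rfl⟩
  have hap₁ : a ≤ p₁ := by rw [hp1def]; linarith
  have hp₂a : p₂ ≤ 1 - a := by rw [hp2def]; linarith
  have hp₁₂ : p₁ ≤ p₂ := by rw [hp1def, hp2def]; linarith
  have hp₁0 : 0 < p₁ := by rw [hp1def]; linarith
  have hp₂1 : p₂ < 1 := by rw [hp2def]; linarith
  have hprod : p₁ * p₂ = q := by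
    rw [hp1def, hp2def]; linear_combination (-(1:ℝ)/4)*hd2
  have hsum : p₁ + p₂ = 1 := by rw [hp1def, hp2def]; ring
  have hkey : ∀ s : ℝ, q - s*(1-s) = (s-p₁)*(s-p₂) := by
    intro s; linear_combination s*hsum - hprod
  -- quadratic sign facts
  have hquad_lo : ∀ s : ℝ, s ≤ p₁ → s*(1-s) ≤ q := by
    intro s hs
    nlinarith [mul_nonneg (by linarith : (0:ℝ) ≤ p₁ - s) (by linarith : (0:ℝ) ≤ p₂ - s), hkey s]
  have hquad_hi : ∀ s : ℝ, p₂ ≤ s → s*(1-s) ≤ q := by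
    intro s hs
    nlinarith [mul_nonneg (by linarith : (0:ℝ) ≤ s - p₁) (by linarith : (0:ℝ) ≤ s - p₂), hkey s]
  have hquad_in : ∀ s : ℝ, p₁ ≤ s → s ≤ p₂ → q ≤ s*(1-s) := by
    intro s hs1 hs2
    nlinarith [mul_nonneg (by linarith : (0:ℝ) ≤ s - p₁) (by linarith : (0:ℝ) ≤ p₂ - s), hkey s]
  -- second derivative signs
  have hFFpos : ∀ t : ℝ, 0 < t → t < 1 → t*(1-t) ≤ q → 0 ≤ ksF'' c t := by
    intro t ht0 ht1 htq
    have h1t : (0:ℝ) < 1 - t := by linarith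
    have ht' : (0:ℝ) < t*(1-t) := by positivity
    have e : t⁻¹ + (1-t)⁻¹ = (t*(1-t))⁻¹ := by
      rw [← one_div, ← one_div, ← one_div, div_add_div _ _ ht0.ne' h1t.ne']
      rw [div_eq_div_iff (by positivity) ht'.ne']
      ring
    have h2 : q⁻¹ ≤ (t*(1-t))⁻¹ := inv_anti₀ ht' htq
    unfold ksF''
    rw [e, hcq]
    linarith
  have hFFneg : ∀ t : ℝ, 0 < t → t < 1 → q ≤ t*(1-t) → ksF'' c t ≤ 0 := by
    intro t ht0 ht1 htq
    have h1t : (0:ℝ) < 1 - t := by linarith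
    have ht' : (0:ℝ) < t*(1-t) := by positivity
    have e : t⁻¹ + (1-t)⁻¹ = (t*(1-t))⁻¹ := by
      rw [← one_div, ← one_div, ← one_div, div_add_div _ _ ht0.ne' h1t.ne']
      rw [div_eq_div_iff (by positivity) ht'.ne']
      ring
    have h2 : (t*(1-t))⁻¹ ≤ q⁻¹ := inv_anti₀ hq htq
    unfold ksF''
    rw [e, hcq]
    linarith
  -- values at a and 1-a
  have hFa : ksF a c a = 0 := by unfold ksF; ring
  have hF'a : ksF' a c a = 0 := by unfold ksF'; ring
  have hFb : ksF a c (1-a) = 0 := by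
    have e : ksF a c (1-a) = (1-2*a)*(Real.log (1-a) - Real.log a) - c*(1-2*a)^2 := by
      unfold ksF; ring
    rw [e, ← hLd, hcdef]
    field_simp
    ring
  have hF'b : ksF' a c (1-a) = 0 := by
    have e : ksF' a c (1-a) = 2*(Real.log (1-a) - Real.log a) - 2*c*(1-2*a) := by
      unfold ksF'; ring
    rw [e, ← hLd, hcdef]
    field_simp
    ring
  -- Step A : F' ≥ 0 on [a, p₁]
  have stepA : ∀ t : ℝ, a ≤ t → t ≤ p₁ → 0 ≤ ksF' a c t := by
    intro t hat htp
    have h := ks_mono_aux (F := ksF' a c) (F' := ksF'' c) (u := a) (v := t)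
      (fun s hs => ksF'_hasDeriv a c s (by linarith [hs.1]) (by linarith [hs.2, hp₁₂, hp₂1]))
      (fun s hs => hFFpos s (by linarith [hs.1]) (by linarith [hs.2, hp₁₂, hp₂1])
        (hquad_lo s (by linarith [hs.2]))) hat
    rw [hF'a] at h; exact h
  -- Step B : F ≥ 0 on [a, p₁]
  have stepB : ∀ t : ℝ, a ≤ t → t ≤ p₁ → 0 ≤ ksF a c t := by
    intro t hat htp
    have h := ks_mono_aux (F := ksF a c) (F' := ksF' a c) (u := a) (v := t)
      (fun s hs => ksF_hasDeriv a c s (by linarith [hs.1]) (by linarith [hs.2, hp₁₂, hp₂1]))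
      (fun s hs => stepA s hs.1.le (by linarith [hs.2])) hat
    rw [hFa] at h; exact h
  -- Step D' : F' ≤ 0 on [p₂, 1-a]
  have stepD' : ∀ t : ℝ, p₂ ≤ t → t ≤ 1-a → ksF' a c t ≤ 0 := by
    intro t hpt hta
    have h := ks_mono_aux (F := ksF' a c) (F' := ksF'' c) (u := t) (v := 1-a)
      (fun s hs => ksF'_hasDeriv a c s (by linarith [hs.1, hp₁0, hp₁₂]) (by linarith [hs.2]))
      (fun s hs => hFFpos s (by linarith [hs.1, hp₁0, hp₁₂]) (by linarith [hs.2])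
        (hquad_hi s (by linarith [hs.1]))) hta
    rw [hF'b] at h; linarith
  -- Step D : F ≥ 0 on [p₂, 1-a]
  have stepD : ∀ t : ℝ, p₂ ≤ t → t ≤ 1-a → 0 ≤ ksF a c t := by
    intro t hpt hta
    have h := ks_anti_aux (F := ksF a c) (F' := ksF' a c) (u := t) (v := 1-a)
      (fun s hs => ksF_hasDeriv a c s (by linarith [hs.1, hp₁0, hp₁₂]) (by linarith [hs.2]))
      (fun s hs => stepD' s (by linarith [hs.1]) hs.2.le) hta
    rw [hFb] at h; exact h
  -- Step E : F ≥ 0 on [1-a, 1)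
  have stepE : ∀ t : ℝ, 1-a ≤ t → t < 1 → 0 ≤ ksF a c t := by
    intro t hat ht1
    have hF'pos : ∀ s : ℝ, 1-a ≤ s → s < 1 → 0 ≤ ksF' a c s := by
      intro s has hs1
      have h := ks_mono_aux (F := ksF' a c) (F' := ksF'' c) (u := 1-a) (v := s)
        (fun r hr => ksF'_hasDeriv a c r (by linarith [hr.1]) (by linarith [hr.2]))
        (fun r hr => hFFpos r (by linarith [hr.1]) (by linarith [hr.2])
          (hquad_hi r (by linarith [hr.1, hp₂a]))) has
      rw [hF'b] at h; exact h
    have h := ks_mono_aux (F := ksF a c) (F' := ksF' a c) (u := 1-a) (v := t)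
      (fun s hs => ksF_hasDeriv a c s (by linarith [hs.1]) (by linarith [hs.2]))
      (fun s hs => hF'pos s hs.1.le (by linarith [hs.2])) hat
    rw [hFb] at h; exact h
  -- main: F ≥ 0 at p
  have hFp : 0 ≤ ksF a c p := by
    rcases le_or_gt p p₁ with h1 | h1
    · exact stepB p hap h1
    rcases le_or_gt p p₂ with h2 | h2
    · rcases le_or_gt 0 (ksF' a c p) with hsgn | hsgn
      · have hmid : ∀ s : ℝ, p₁ ≤ s → s < p → 0 ≤ ksF' a c s := by
          intro s hs1 hs2
          have h := ks_anti_aux (F := ksF' a c) (F' := ksF'' c) (u := s) (v := p)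
            (fun r hr => ksF'_hasDeriv a c r (by linarith [hr.1, hp₁0]) (by linarith [hr.2, hp₂1]))
            (fun r hr => hFFneg r (by linarith [hr.1, hp₁0]) (by linarith [hr.2, hp₂1])
              (hquad_in r (by linarith [hr.1]) (by linarith [hr.2])))
            hs2.le
          linarith
        have h := ks_mono_aux (F := ksF a c) (F' := ksF' a c) (u := p₁) (v := p)
          (fun s hs => ksF_hasDeriv a c s (by linarith [hs.1, hp₁0]) (by linarith [hs.2, hp₂1]))
          (fun s hs => hmid s hs.1.le hs.2) h1.le
        have hB := stepB p₁ hap₁ le_rfl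
        linarith
      · have hmid : ∀ s : ℝ, p < s → s ≤ p₂ → ksF' a c s ≤ 0 := by
          intro s hs1 hs2
          have h := ks_anti_aux (F := ksF' a c) (F' := ksF'' c) (u := p) (v := s)
            (fun r hr => ksF'_hasDeriv a c r (by linarith [hr.1, hp₁0, h1]) (by linarith [hr.2, hp₂1]))
            (fun r hr => hFFneg r (by linarith [hr.1, hp₁0, h1]) (by linarith [hr.2, hp₂1])
              (hquad_in r (by linarith [hr.1, h1]) (by linarith [hr.2])))
            hs1.le
          linarith
        have h := ks_anti_aux (F := ksF a c) (F' := ksF' a c) (u := p) (v := p₂)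
          (fun s hs => ksF_hasDeriv a c s (by linarith [hs.1, hp₁0, h1]) (by linarith [hs.2, hp₂1]))
          (fun s hs => hmid s hs.1 hs.2.le) h2
        have hD := stepD p₂ le_rfl hp₂a
        linarith
    rcases le_or_gt p (1-a) with h3 | h3
    · exact stepD p h2.le h3
    · exact stepE p h3.le hp1
  -- unfold conclusion
  have hKL : c * (p-a)^2 ≤
      p * (Real.log p - Real.log a) + (1-p) * (Real.log (1-p) - Real.log (1-a)) := by
    have e : ksF a c p = p * (Real.log p - Real.log a) + (1-p) * (Real.log (1-p) - Real.log (1-a))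
        - c * (p-a)^2 := by unfold ksF; ring
    rw [e] at hFp
    linarith
  have h2 := mul_le_mul_of_nonneg_left hKL h2a.le
  have e2 : (1-2*a) * (c * (p-a)^2) = (p-a)^2 * L := by
    rw [hcdef]; field_simp
  rw [← hLdef, div_mul_eq_mul_div, le_div_iff₀ hL]
  calc (p-a)^2 * L = (1-2*a) * (c * (p-a)^2) := e2.symm
    _ ≤ (1-2*a) * (p * (Real.log p - Real.log a) + (1-p) * (Real.log (1-p) - Real.log (1-a))) := h2


/-- Easy case `a ≥ 1/2`. -/
lemma ksKL_half (a p : ℝ) (ha2 : 1/2 ≤ a) (ha1 : a < 1) (hap : a ≤ p) (hp1 : p < 1) :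
    (p-a)^2 ≤ 2*a*(1-a) *
      (p * (Real.log p - Real.log a) + (1-p) * (Real.log (1-p) - Real.log (1-a))) := by
  have ha0 : 0 < a := by linarith
  have h1a : (0:ℝ) < 1 - a := by linarith
  obtain ⟨c, hcdef⟩ : ∃ c : ℝ, c = (2*a*(1-a))⁻¹ := ⟨_, rfl⟩
  have haa : (0:ℝ) < 2*a*(1-a) := by positivity
  have hc : 0 < c := hcdef ▸ by positivity
  have hFa : ksF a c a = 0 := by unfold ksF; ring
  have hF'a : ksF' a c a = 0 := by unfold ksF'; ring
  have hF'pos : ∀ t : ℝ, a ≤ t → t < 1 → 0 ≤ ksF' a c t := by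
    intro t hat ht1
    have h := ks_mono_aux (F := ksF' a c) (F' := ksF'' c) (u := a) (v := t)
      (fun s hs => ksF'_hasDeriv a c s (by linarith [hs.1]) (by linarith [hs.2]))
      (fun s hs => by
        have hs0 : 0 < s := by linarith [hs.1]
        have hs1 : s < 1 := by linarith [hs.2]
        have h1s : (0:ℝ) < 1 - s := by linarith
        have hle : s*(1-s) ≤ a*(1-a) := by nlinarith [hs.1]
        have hsp : (0:ℝ) < s*(1-s) := by positivity
        have e : s⁻¹ + (1-s)⁻¹ = (s*(1-s))⁻¹ := by
          rw [← one_div, ← one_div, ← one_div, div_add_div _ _ hs0.ne' h1s.ne']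
          rw [div_eq_div_iff (by positivity) hsp.ne']
          ring
        have h2 : (a*(1-a))⁻¹ ≤ (s*(1-s))⁻¹ := inv_anti₀ hsp hle
        have e2 : 2*c = (a*(1-a))⁻¹ := by
          rw [hcdef, ← one_div, ← one_div]
          field_simp
        unfold ksF''
        rw [e, e2]
        linarith) hat
    rw [hF'a] at h; exact h
  have hFp : 0 ≤ ksF a c p := by
    have h := ks_mono_aux (F := ksF a c) (F' := ksF' a c) (u := a) (v := p)
      (fun s hs => ksF_hasDeriv a c s (by linarith [hs.1]) (by linarith [hs.2]))
      (fun s hs => hF'pos s hs.1.le (by linarith [hs.2])) hap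
    rw [hFa] at h; exact h
  have hKL : c * (p-a)^2 ≤
      p * (Real.log p - Real.log a) + (1-p) * (Real.log (1-p) - Real.log (1-a)) := by
    have e : ksF a c p = p * (Real.log p - Real.log a) + (1-p) * (Real.log (1-p) - Real.log (1-a))
        - c * (p-a)^2 := by unfold ksF; ring
    rw [e] at hFp
    linarith
  have h2 := mul_le_mul_of_nonneg_left hKL haa.le
  have e2 : (2*a*(1-a)) * (c * (p-a)^2) = (p-a)^2 := by
    rw [hcdef]; field_simp
  rw [e2] at h2
  linarith

/-- Primal reduction: pointwise bound from a KL lower bound. -/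
lemma ks_primal (a C s : ℝ) (ha0 : 0 < a) (ha1 : a < 1) (hC : 0 < C) (hs : 0 ≤ s)
    (hKL : ∀ p : ℝ, a ≤ p → p < 1 → (p-a)^2 ≤ 4*C *
      (p * (Real.log p - Real.log a) + (1-p) * (Real.log (1-p) - Real.log (1-a)))) :
    Real.log (a * Real.exp ((1-a)*s) + (1-a) * Real.exp (-(a*s))) ≤ C * s^2 := by
  have h1a : (0:ℝ) < 1 - a := by linarith
  have hu1 : 1 ≤ Real.exp s := by simpa using Real.exp_le_exp.2 hs
  obtain ⟨u, hudef⟩ : ∃ u : ℝ, u = Real.exp s := ⟨_, rfl⟩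
  have hu1' : 1 ≤ u := hudef ▸ hu1
  have hu0 : 0 < u := by linarith
  obtain ⟨D, hDdef⟩ : ∃ D : ℝ, D = a*u + (1-a) := ⟨_, rfl⟩
  have hD0 : 0 < D := by rw [hDdef]; positivity
  obtain ⟨p, hpdef⟩ : ∃ p : ℝ, p = a*u/D := ⟨_, rfl⟩
  have hp0 : 0 < p := by rw [hpdef]; positivity
  have hap : a ≤ p := by
    rw [hpdef, le_div_iff₀ hD0, hDdef]
    nlinarith [mul_nonneg (mul_nonneg ha0.le h1a.le) (by linarith : (0:ℝ) ≤ u - 1)]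
  have hp1 : p < 1 := by
    rw [hpdef, div_lt_one hD0, hDdef]
    linarith
  have h1p : 1 - p = (1-a)/D := by
    rw [hpdef, hDdef]
    field_simp
    ring
  -- LHS = -a*s + log D
  have hLHS : Real.log (a * Real.exp ((1-a)*s) + (1-a) * Real.exp (-(a*s)))
      = -(a*s) + Real.log D := by
    have e1 : a * Real.exp ((1-a)*s) + (1-a) * Real.exp (-(a*s))
        = Real.exp (-(a*s)) * D := by
      rw [hDdef, hudef]
      have : (1-a)*s = s + -(a*s) := by ring
      rw [this, Real.exp_add]
      ring
    rw [e1, Real.log_mul (Real.exp_ne_zero _) hD0.ne', Real.log_exp]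
  -- log p - log a = s - log D ; log(1-p) - log(1-a) = - log D
  have hlp : Real.log p - Real.log a = s - Real.log D := by
    rw [hpdef, Real.log_div (by positivity) hD0.ne', Real.log_mul ha0.ne' hu0.ne',
      hudef, Real.log_exp]
    ring
  have hl1p : Real.log (1-p) - Real.log (1-a) = - Real.log D := by
    rw [h1p, Real.log_div h1a.ne' hD0.ne']
    ring
  have hKLp := hKL p hap hp1
  rw [hlp, hl1p] at hKLp
  -- hKLp : (p-a)^2 ≤ 4C*(p*(s - log D) + (1-p)*(-log D)) = 4C*(p*s - log D)
  have hKLp' : (p-a)^2 ≤ 4*C*(p*s - Real.log D) := by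
    calc (p-a)^2 ≤ 4*C * (p * (s - Real.log D) + (1-p) * (- Real.log D)) := hKLp
      _ = 4*C*(p*s - Real.log D) := by ring
  rw [hLHS]
  nlinarith [sq_nonneg (2*C*s - (p-a)), hC, hKLp']


/-- Kearns-Saul sharpening of Hoeffding's lemma: for `g, h > 0`,
`ψ_{B,g,h} λ ≤ (φ(g,h)/(gh)) · λ²/2` for all `λ ≥ 0`, with equality at
`λ = (h−g)/φ(g,h)` when `g < h`. -/
theorem kearns_saul (g h : ℝ) (hg : 0 < g) (hh : 0 < h) :
    (∀ l : ℝ, 0 ≤ l → psiB g h l ≤ ksPhi g h / (g * h) * (l ^ 2 / 2)) ∧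
    (g < h →
      psiB g h ((h - g) / ksPhi g h)
        = ksPhi g h / (g * h) * (((h - g) / ksPhi g h) ^ 2 / 2)) := by
  have hgh : (0:ℝ) < g + h := by linarith
  obtain ⟨a, hadef⟩ : ∃ a : ℝ, a = g/(g+h) := ⟨_, rfl⟩
  have ha0 : 0 < a := by rw [hadef]; positivity
  have ha1 : a < 1 := by rw [hadef, div_lt_one hgh]; linarith
  have h1a : 1 - a = h/(g+h) := by rw [hadef]; field_simp; ring
  have hphi : 0 < ksPhi g h := by
    unfold ksPhi
    split_ifs with hlt
    · have hM : 0 < Real.log (h/g) := Real.log_pos (by rw [lt_div_iff₀ hg]; linarith)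
      have : (0:ℝ) < h^2 - g^2 := by nlinarith
      positivity
    · positivity
  constructor
  · -- the inequality
    intro l hl
    obtain ⟨C, hCdef⟩ : ∃ C : ℝ, C = ksPhi g h / (2*(g+h)^2) := ⟨_, rfl⟩
    have hC : 0 < C := by rw [hCdef]; positivity
    obtain ⟨s, hsdef⟩ : ∃ s : ℝ, s = (g+h)*l := ⟨_, rfl⟩
    have hs : 0 ≤ s := by rw [hsdef]; positivity
    have e1 : (g * Real.exp (h * l) + h * Real.exp (-(g * l))) / (g + h)
        = a * Real.exp ((1-a)*s) + (1-a) * Real.exp (-(a*s)) := by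
      have eas : (1-a)*s = h*l := by rw [h1a, hsdef]; field_simp
      have eas2 : a*s = g*l := by rw [hadef, hsdef]; field_simp
      rw [eas, eas2, hadef]
      field_simp
      ring
    have hKL : ∀ p : ℝ, a ≤ p → p < 1 → (p-a)^2 ≤ 4*C *
        (p * (Real.log p - Real.log a) + (1-p) * (Real.log (1-p) - Real.log (1-a))) := by
      intro p hp hp1'
      by_cases hlt : g < h
      · have ha2 : a < 1/2 := by rw [hadef, div_lt_iff₀ hgh]; linarith
        have harg : (1-a)/a = h/g := by
          rw [h1a, hadef]; field_simp
        have hM : 0 < Real.log (h/g) := Real.log_pos (by rw [lt_div_iff₀ hg]; linarith)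
        have hcoef : (1-2*a)/Real.log (h/g) = 4*C := by
          rw [hCdef]
          unfold ksPhi
          rw [if_pos hlt, hadef]
          field_simp
          ring
        have hOW := ksKL_OW a p ha0 ha2 hp hp1'
        rw [harg, hcoef] at hOW
        exact hOW
      · have ha2 : 1/2 ≤ a := by rw [hadef, le_div_iff₀ hgh]; push_neg at hlt; linarith
        have hcoef : 2*a*(1-a) = 4*C := by
          rw [hCdef]
          unfold ksPhi
          rw [if_neg hlt, hadef]
          field_simp
          ring
        have hH := ksKL_half a p ha2 ha1 hp hp1'
        rw [hcoef] at hH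
        exact hH
    have hmain := ks_primal a C s ha0 ha1 hC hs hKL
    unfold psiB
    rw [e1]
    have e2 : C * s^2 = ksPhi g h * (l^2/2) := by
      rw [hCdef, hsdef]
      field_simp
    rw [e2] at hmain
    have hgh' : (0:ℝ) < 1/(g*h) := by positivity
    calc 1/(g*h) * Real.log (a * Real.exp ((1-a)*s) + (1-a) * Real.exp (-(a*s)))
        ≤ 1/(g*h) * (ksPhi g h * (l^2/2)) := by
          exact mul_le_mul_of_nonneg_left hmain hgh'.le
      _ = ksPhi g h / (g*h) * (l^2/2) := by ring
  · -- the equality case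
    intro hlt
    have hM : 0 < Real.log (h/g) := Real.log_pos (by rw [lt_div_iff₀ hg]; linarith)
    obtain ⟨M, hMdef⟩ : ∃ M : ℝ, M = Real.log (h/g) := ⟨_, rfl⟩
    have hM0 : 0 < M := hMdef ▸ hM
    obtain ⟨t, htdef⟩ : ∃ t : ℝ, t = M/(g+h) := ⟨_, rfl⟩
    have hksphi : ksPhi g h = (h^2-g^2)/(2*M) := by
      unfold ksPhi; rw [if_pos hlt, hMdef]
    have hne : h^2 - g^2 ≠ 0 := by nlinarith
    have hl2 : (h-g)/ksPhi g h = 2*t := by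
      rw [hksphi, htdef]
      rw [div_div_eq_mul_div]
      field_simp
      ring
    have key : g * Real.exp (h*(2*t)) + h * Real.exp (-(g*(2*t)))
        = (g+h) * Real.exp ((h-g)*t) := by
      have hexp : Real.exp ((g+h)*t) = h/g := by
        have e0 : (g+h)*t = M := by rw [htdef]; field_simp
        rw [e0, hMdef, Real.exp_log (by positivity)]
      have e1 : h*(2*t) = (h-g)*t + (g+h)*t := by ring
      have e2 : -(g*(2*t)) = (h-g)*t + -((g+h)*t) := by ring
      rw [e1, e2, Real.exp_add, Real.exp_add, Real.exp_neg, hexp]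
      field_simp
      ring
    unfold psiB
    rw [hl2, key, mul_comm (g+h), mul_div_assoc, div_self hgh.ne', mul_one, Real.log_exp]
    rw [hksphi, htdef]
    field_simp
    ring
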